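/- Let k_F and k_G be two Cantor maps, with inverse branches K^F_±, K^G_± respectively. Then there exists a strictly increasing continuous map ψ : [0,1] → [0,1] such that ψ ∘ K^F_+ = K^G_+ ∘ ψ and ψ ∘ K^F_- = K^G_- ∘ ψ. Moreover, the restriction of ψ to the Cantor set of k_F is uniquely determined. -/

import Mathlib

open Set

/-- A Cantor map: a differentiable map `k : [0,a] ∪ [b,1] → [0,1]` with
`k(0)=k(1)=0`, `k(a)=k(b)=1` and `|k'| > γ > 1`, together with its two inverse
branches `Kp = (k|_{[0,a]})⁻¹` and `Km = (k|_{[b,1]})⁻¹`. -/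
structure CantorMap where
  a : ℝ
  b : ℝ
  γ : ℝ
  k : ℝ → ℝ
  Kp : ℝ → ℝ
  Km : ℝ → ℝ
  ha : 0 < a
  hab : a < b
  hb : b < 1
  k0 : k 0 = 0
  k1 : k 1 = 0
  ka : k a = 1
  kb : k b = 1
  k_diff : ∀ y ∈ Icc 0 a ∪ Icc b 1, DifferentiableAt ℝ k y
  hγ : 1 < γ
  k_expand : ∀ y ∈ Icc 0 a ∪ Icc b 1, γ < |deriv k y|
  Kp_mem : ∀ y ∈ Icc (0:ℝ) 1, Kp y ∈ Icc 0 a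
  Kp_right_inv : ∀ y ∈ Icc (0:ℝ) 1, k (Kp y) = y
  Kp_left_inv : ∀ x ∈ Icc 0 a, Kp (k x) = x
  Km_mem : ∀ y ∈ Icc (0:ℝ) 1, Km y ∈ Icc b 1
  Km_right_inv : ∀ y ∈ Icc (0:ℝ) 1, k (Km y) = y
  Km_left_inv : ∀ x ∈ Icc b 1, Km (k x) = x

/-- The Cantor set associated to a Cantor map: `𝒦 = ⋂ₙ k⁻ⁿ([0,a] ∪ [b,1])`. -/
def CantorMap.cantorSet (C : CantorMap) : Set ℝ :=
  ⋂ n : ℕ, (C.k^[n]) ⁻¹' (Icc 0 C.a ∪ Icc C.b 1)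

/-- `ψ` is a strictly increasing continuous self-map of `[0,1]` intertwining the
inverse branches of the Cantor maps `F` and `G`. -/
def Conjugating (F G : CantorMap) (ψ : ℝ → ℝ) : Prop :=
  ContinuousOn ψ (Icc 0 1) ∧ StrictMonoOn ψ (Icc 0 1) ∧ MapsTo ψ (Icc 0 1) (Icc 0 1) ∧
    (∀ y ∈ Icc (0:ℝ) 1, ψ (F.Kp y) = G.Kp (ψ y)) ∧
    (∀ y ∈ Icc (0:ℝ) 1, ψ (F.Km y) = G.Km (ψ y))

namespace CantorMap

variable (C : CantorMap)

lemma hγ0 : (0:ℝ) < C.γ := lt_trans one_pos C.hγ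

lemma contOn_left : ContinuousOn C.k (Icc 0 C.a) :=
  fun x hx => (C.k_diff x (Or.inl hx)).continuousAt.continuousWithinAt

lemma contOn_right : ContinuousOn C.k (Icc C.b 1) :=
  fun x hx => (C.k_diff x (Or.inr hx)).continuousAt.continuousWithinAt

lemma expand_left : ∀ x ∈ Icc (0:ℝ) C.a, ∀ y ∈ Icc (0:ℝ) C.a, x < y →
    C.γ * (y - x) ≤ |C.k y - C.k x| := by
  intro x hx y hy hxy
  have hsub : Icc x y ⊆ Icc 0 C.a := Icc_subset_Icc hx.1 hy.2
  obtain ⟨c, hc, hc'⟩ := exists_deriv_eq_slope C.k hxy (C.contOn_left.mono hsub)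
    (fun z hz => (C.k_diff z (Or.inl (hsub (Ioo_subset_Icc_self hz)))).differentiableWithinAt)
  have hce : C.γ < |deriv C.k c| := C.k_expand c (Or.inl (hsub (Ioo_subset_Icc_self hc)))
  rw [hc', abs_div, abs_of_pos (by linarith : (0:ℝ) < y - x)] at hce
  have : C.γ * (y - x) < |C.k y - C.k x| := by
    rw [lt_div_iff₀ (by linarith : (0:ℝ) < y - x)] at hce
    linarith
  linarith

lemma expand_right : ∀ x ∈ Icc C.b (1:ℝ), ∀ y ∈ Icc C.b (1:ℝ), x < y →
    C.γ * (y - x) ≤ |C.k y - C.k x| := by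
  intro x hx y hy hxy
  have hsub : Icc x y ⊆ Icc C.b 1 := Icc_subset_Icc hx.1 hy.2
  obtain ⟨c, hc, hc'⟩ := exists_deriv_eq_slope C.k hxy (C.contOn_right.mono hsub)
    (fun z hz => (C.k_diff z (Or.inr (hsub (Ioo_subset_Icc_self hz)))).differentiableWithinAt)
  have hce : C.γ < |deriv C.k c| := C.k_expand c (Or.inr (hsub (Ioo_subset_Icc_self hc)))
  rw [hc', abs_div, abs_of_pos (by linarith : (0:ℝ) < y - x)] at hce
  have : C.γ * (y - x) < |C.k y - C.k x| := by
    rw [lt_div_iff₀ (by linarith : (0:ℝ) < y - x)] at hce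
    linarith
  linarith

lemma injOn_left : InjOn C.k (Icc 0 C.a) := by
  intro x hx y hy hxy
  by_contra hne
  rcases lt_or_gt_of_ne hne with h | h
  · have := C.expand_left x hx y hy h
    rw [hxy] at this; simp at this; nlinarith [C.hγ0]
  · have := C.expand_left y hy x hx h
    rw [hxy] at this; simp at this; nlinarith [C.hγ0]

lemma injOn_right : InjOn C.k (Icc C.b 1) := by
  intro x hx y hy hxy
  by_contra hne
  rcases lt_or_gt_of_ne hne with h | h
  · have := C.expand_right x hx y hy h
    rw [hxy] at this; simp at this; nlinarith [C.hγ0]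
  · have := C.expand_right y hy x hx h
    rw [hxy] at this; simp at this; nlinarith [C.hγ0]

lemma strictMono_left : StrictMonoOn C.k (Icc 0 C.a) :=
  ContinuousOn.strictMonoOn_of_injOn_Icc C.ha.le (by rw [C.k0, C.ka]; norm_num)
    C.contOn_left C.injOn_left

lemma strictAnti_right : StrictAntiOn C.k (Icc C.b 1) :=
  ContinuousOn.strictAntiOn_of_injOn_Icc C.hb.le (by rw [C.k1, C.kb]; norm_num)
    C.contOn_right C.injOn_right

lemma maps_left : MapsTo C.k (Icc 0 C.a) (Icc 0 1) := by
  intro x hx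
  constructor
  · have := C.strictMono_left.monotoneOn (left_mem_Icc.2 C.ha.le) hx hx.1
    rwa [C.k0] at this
  · have := C.strictMono_left.monotoneOn hx (right_mem_Icc.2 C.ha.le) hx.2
    rwa [C.ka] at this

lemma maps_right : MapsTo C.k (Icc C.b 1) (Icc 0 1) := by
  intro x hx
  constructor
  · have := C.strictAnti_right.antitoneOn hx (right_mem_Icc.2 C.hb.le) hx.2
    rwa [C.k1] at this
  · have := C.strictAnti_right.antitoneOn (left_mem_Icc.2 C.hb.le) hx hx.1
    rwa [C.kb] at this

lemma Kp0 : C.Kp 0 = 0 := by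
  have := C.Kp_left_inv 0 (left_mem_Icc.2 C.ha.le); rwa [C.k0] at this

lemma Kp1 : C.Kp 1 = C.a := by
  have := C.Kp_left_inv C.a (right_mem_Icc.2 C.ha.le); rwa [C.ka] at this

lemma Km0 : C.Km 0 = 1 := by
  have := C.Km_left_inv 1 (right_mem_Icc.2 C.hb.le); rwa [C.k1] at this

lemma Km1 : C.Km 1 = C.b := by
  have := C.Km_left_inv C.b (left_mem_Icc.2 C.hb.le); rwa [C.kb] at this

lemma Kp_strictMono : StrictMonoOn C.Kp (Icc 0 1) := by
  intro u hu v hv huv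
  by_contra h
  push_neg at h
  have h2 := C.strictMono_left.monotoneOn (C.Kp_mem v hv) (C.Kp_mem u hu) h
  rw [C.Kp_right_inv u hu, C.Kp_right_inv v hv] at h2
  exact absurd h2 (not_le.2 huv)

lemma Km_strictAnti : StrictAntiOn C.Km (Icc 0 1) := by
  intro u hu v hv huv
  by_contra h
  push_neg at h
  have h2 := C.strictAnti_right.antitoneOn (C.Km_mem u hu) (C.Km_mem v hv) h
  rw [C.Km_right_inv u hu, C.Km_right_inv v hv] at h2
  exact absurd h2 (not_le.2 huv)

lemma Kp_lip : ∀ u ∈ Icc (0:ℝ) 1, ∀ v ∈ Icc (0:ℝ) 1,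
    |C.Kp u - C.Kp v| ≤ |u - v| / C.γ := by
  intro u hu v hv
  rw [le_div_iff₀ C.hγ0]
  rcases lt_trichotomy (C.Kp u) (C.Kp v) with h | h | h
  · have := C.expand_left _ (C.Kp_mem u hu) _ (C.Kp_mem v hv) h
    rw [C.Kp_right_inv u hu, C.Kp_right_inv v hv] at this
    rw [abs_sub_comm u v, abs_sub_comm (C.Kp u) (C.Kp v), abs_of_pos (by linarith)]
    linarith
  · rw [h]; simp [abs_nonneg]
  · have := C.expand_left _ (C.Kp_mem v hv) _ (C.Kp_mem u hu) h
    rw [C.Kp_right_inv u hu, C.Kp_right_inv v hv] at this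
    rw [abs_of_pos (by linarith : (0:ℝ) < C.Kp u - C.Kp v)]
    linarith

lemma Km_lip : ∀ u ∈ Icc (0:ℝ) 1, ∀ v ∈ Icc (0:ℝ) 1,
    |C.Km u - C.Km v| ≤ |u - v| / C.γ := by
  intro u hu v hv
  rw [le_div_iff₀ C.hγ0]
  rcases lt_trichotomy (C.Km u) (C.Km v) with h | h | h
  · have := C.expand_right _ (C.Km_mem u hu) _ (C.Km_mem v hv) h
    rw [C.Km_right_inv u hu, C.Km_right_inv v hv] at this
    rw [abs_sub_comm u v, abs_sub_comm (C.Km u) (C.Km v), abs_of_pos (by linarith)]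
    linarith
  · rw [h]; simp [abs_nonneg]
  · have := C.expand_right _ (C.Km_mem v hv) _ (C.Km_mem u hu) h
    rw [C.Km_right_inv u hu, C.Km_right_inv v hv] at this
    rw [abs_of_pos (by linarith : (0:ℝ) < C.Km u - C.Km v)]
    linarith

end CantorMap

namespace CantorMap

variable (C : CantorMap)

lemma Kp_contOn : ContinuousOn C.Kp (Icc 0 1) := by
  have : LipschitzOnWith (Real.toNNReal (1/C.γ)) C.Kp (Icc 0 1) := by
    apply LipschitzOnWith.of_dist_le_mul
    intro x hx y hy
    rw [Real.dist_eq, Real.dist_eq, Real.coe_toNNReal _ (le_of_lt (div_pos one_pos C.hγ0))]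
    calc |C.Kp x - C.Kp y| ≤ |x - y| / C.γ := C.Kp_lip x hx y hy
      _ = 1 / C.γ * |x - y| := by ring
  exact this.continuousOn

lemma Km_contOn : ContinuousOn C.Km (Icc 0 1) := by
  have : LipschitzOnWith (Real.toNNReal (1/C.γ)) C.Km (Icc 0 1) := by
    apply LipschitzOnWith.of_dist_le_mul
    intro x hx y hy
    rw [Real.dist_eq, Real.dist_eq, Real.coe_toNNReal _ (le_of_lt (div_pos one_pos C.hγ0))]
    calc |C.Km x - C.Km y| ≤ |x - y| / C.γ := C.Km_lip x hx y hy
      _ = 1 / C.γ * |x - y| := by ring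
  exact this.continuousOn

end CantorMap

namespace CantorConj

open CantorMap

noncomputable def line (F G : CantorMap) : ℝ → ℝ :=
  fun x => G.a + (x - F.a) * ((G.b - G.a) / (F.b - F.a))

noncomputable def T (F G : CantorMap) (f : ℝ → ℝ) : ℝ → ℝ := fun x =>
  if x ≤ F.a then G.Kp (f (F.k x)) else if x < F.b then line F G x else G.Km (f (F.k x))

def Good (f : ℝ → ℝ) : Prop :=
  ContinuousOn f (Icc 0 1) ∧ MonotoneOn f (Icc 0 1) ∧ MapsTo f (Icc 0 1) (Icc 0 1) ∧
    f 0 = 0 ∧ f 1 = 1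

variable (F G : CantorMap)

lemma slope_pos : 0 < (G.b - G.a) / (F.b - F.a) :=
  div_pos (by linarith [G.hab]) (by linarith [F.hab])

lemma line_a : line F G F.a = G.a := by simp [line]

lemma line_b : line F G F.b = G.b := by
  have h : F.b - F.a ≠ 0 := by have := F.hab; linarith
  simp only [line]
  field_simp
  ring

lemma line_strictMono : StrictMono (line F G) := by
  intro x y h
  have := slope_pos F G
  simp only [line]
  nlinarith

lemma T_eq₁ (f : ℝ → ℝ) {x : ℝ} (hx : x ≤ F.a) : T F G f x = G.Kp (f (F.k x)) := if_pos hx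

lemma T_eq₃ (f : ℝ → ℝ) {x : ℝ} (hx : F.b ≤ x) : T F G f x = G.Km (f (F.k x)) := by
  have h1 : ¬ x ≤ F.a := by have := F.hab; push_neg; linarith
  have h2 : ¬ x < F.b := not_lt.2 hx
  simp [T, h1, h2]

lemma T_gap (f : ℝ → ℝ) (hf1 : f 1 = 1) {x : ℝ} (hx : x ∈ Icc F.a F.b) :
    T F G f x = line F G x := by
  rcases eq_or_lt_of_le hx.1 with h | h
  · rw [← h, T_eq₁ F G f le_rfl, F.ka, hf1, G.Kp1, line_a]
  · rcases eq_or_lt_of_le hx.2 with h2 | h2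
    · rw [h2, T_eq₃ F G f le_rfl, F.kb, hf1, G.Km1, line_b]
    · have h1 : ¬ x ≤ F.a := not_le.2 h
      simp [T, h1, h2]

lemma T_zero (f : ℝ → ℝ) (hf0 : f 0 = 0) : T F G f 0 = 0 := by
  rw [T_eq₁ F G f F.ha.le, F.k0, hf0, G.Kp0]

lemma T_one (f : ℝ → ℝ) (hf0 : f 0 = 0) : T F G f 1 = 1 := by
  rw [T_eq₃ F G f F.hb.le, F.k1, hf0, G.Km0]

lemma T_mem₁ (f : ℝ → ℝ) (hf : MapsTo f (Icc 0 1) (Icc 0 1)) {x : ℝ} (hx : x ∈ Icc 0 F.a) :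
    T F G f x ∈ Icc 0 G.a := by
  rw [T_eq₁ F G f hx.2]
  exact G.Kp_mem _ (hf (F.maps_left hx))

lemma T_mem₃ (f : ℝ → ℝ) (hf : MapsTo f (Icc 0 1) (Icc 0 1)) {x : ℝ} (hx : x ∈ Icc F.b 1) :
    T F G f x ∈ Icc G.b 1 := by
  rw [T_eq₃ F G f hx.1]
  exact G.Km_mem _ (hf (F.maps_right hx))

lemma T_mem₂ (f : ℝ → ℝ) (hf1 : f 1 = 1) {x : ℝ} (hx : x ∈ Icc F.a F.b) :
    T F G f x ∈ Icc G.a G.b := by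
  rw [T_gap F G f hf1 hx]
  constructor
  · rw [← line_a F G]; exact (line_strictMono F G).monotone hx.1
  · rw [← line_b F G]; exact (line_strictMono F G).monotone hx.2

lemma contOn_union {f : ℝ → ℝ} {s t : Set ℝ} (hs : IsClosed s) (ht : IsClosed t)
    (h1 : ContinuousOn f s) (h2 : ContinuousOn f t) : ContinuousOn f (s ∪ t) := by
  intro x hx
  have A : ContinuousWithinAt f s x := by
    by_cases h : x ∈ s
    · exact h1 x h
    · exact continuousWithinAt_of_notMem_closure (by rwa [hs.closure_eq])
  have B : ContinuousWithinAt f t x := by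
    by_cases h : x ∈ t
    · exact h2 x h
    · exact continuousWithinAt_of_notMem_closure (by rwa [ht.closure_eq])
  exact A.union B

lemma monotoneOn_glue {f : ℝ → ℝ} {u v w : ℝ} (huv : u ≤ v) (hvw : v ≤ w)
    (h1 : MonotoneOn f (Icc u v)) (h2 : MonotoneOn f (Icc v w)) : MonotoneOn f (Icc u w) := by
  intro x hx y hy hxy
  rcases le_total y v with h | h
  · exact h1 ⟨hx.1, hxy.trans h⟩ ⟨hy.1, h⟩ hxy
  · rcases le_total x v with h' | h'
    · calc f x ≤ f v := h1 ⟨hx.1, h'⟩ ⟨huv, le_rfl⟩ h'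
        _ ≤ f y := h2 ⟨le_rfl, hvw⟩ ⟨h, hy.2⟩ h
    · exact h2 ⟨h', hx.2⟩ ⟨h, hy.2⟩ hxy

lemma good_T {f : ℝ → ℝ} (hf : Good f) : Good (T F G f) := by
  obtain ⟨hc, hm, hmap, hf0, hf1⟩ := hf
  have hI1 : Icc (0:ℝ) F.a ∪ Icc F.a F.b = Icc 0 F.b :=
    Icc_union_Icc_eq_Icc F.ha.le F.hab.le
  have hI2 : Icc (0:ℝ) F.b ∪ Icc F.b 1 = Icc 0 1 :=
    Icc_union_Icc_eq_Icc (lt_trans F.ha F.hab).le F.hb.le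
  have c1 : ContinuousOn (T F G f) (Icc 0 F.a) := by
    refine ContinuousOn.congr ?_ (fun x hx => T_eq₁ F G f hx.2)
    exact (G.Kp_contOn.comp (hc.comp F.contOn_left F.maps_left) (hmap.comp F.maps_left))
  have c2 : ContinuousOn (T F G f) (Icc F.a F.b) := by
    refine ContinuousOn.congr ?_ (fun x hx => T_gap F G f hf1 hx)
    exact Continuous.continuousOn
      (continuous_const.add ((continuous_id.sub continuous_const).mul continuous_const))
  have c3 : ContinuousOn (T F G f) (Icc F.b 1) := by
    refine ContinuousOn.congr ?_ (fun x hx => T_eq₃ F G f hx.1)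
    exact (G.Km_contOn.comp (hc.comp F.contOn_right F.maps_right) (hmap.comp F.maps_right))
  have hcT : ContinuousOn (T F G f) (Icc 0 1) := by
    rw [← hI2, ← hI1]
    exact contOn_union (isClosed_Icc.union isClosed_Icc) isClosed_Icc
      (contOn_union isClosed_Icc isClosed_Icc c1 c2) c3
  have m1 : MonotoneOn (T F G f) (Icc 0 F.a) := by
    intro x hx y hy hxy
    rw [T_eq₁ F G f hx.2, T_eq₁ F G f hy.2]
    exact (G.Kp_strictMono.monotoneOn) (hmap (F.maps_left hx)) (hmap (F.maps_left hy))
      (hm (F.maps_left hx) (F.maps_left hy)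
        (F.strictMono_left.monotoneOn hx hy hxy))
  have m2 : MonotoneOn (T F G f) (Icc F.a F.b) := by
    intro x hx y hy hxy
    rw [T_gap F G f hf1 hx, T_gap F G f hf1 hy]
    exact (line_strictMono F G).monotone hxy
  have m3 : MonotoneOn (T F G f) (Icc F.b 1) := by
    intro x hx y hy hxy
    rw [T_eq₃ F G f hx.1, T_eq₃ F G f hy.1]
    exact G.Km_strictAnti.antitoneOn (hmap (F.maps_right hy)) (hmap (F.maps_right hx))
      (hm (F.maps_right hy) (F.maps_right hx)
        (F.strictAnti_right.antitoneOn hx hy hxy))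
  have hmT : MonotoneOn (T F G f) (Icc 0 1) := by
    exact monotoneOn_glue (lt_trans F.ha F.hab).le F.hb.le
      (monotoneOn_glue F.ha.le F.hab.le m1 m2) m3
  have hmapT : MapsTo (T F G f) (Icc 0 1) (Icc 0 1) := by
    intro x hx
    rcases le_total x F.a with h | h
    · have := T_mem₁ F G f hmap ⟨hx.1, h⟩
      exact ⟨this.1, this.2.trans (by linarith [F.hab, F.hb, G.hab, G.hb])⟩
    · rcases le_total x F.b with h' | h'
      · have := T_mem₂ F G f hf1 ⟨h, h'⟩
        exact ⟨le_trans G.ha.le this.1, this.2.trans (by linarith [G.hb])⟩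
      · have := T_mem₃ F G f hmap ⟨h', hx.2⟩
        exact ⟨le_trans (by linarith [G.ha, G.hab]) this.1, this.2⟩
  exact ⟨hcT, hmT, hmapT, T_zero F G f hf0, T_one F G f hf0⟩

lemma T_contract {f g : ℝ → ℝ} (hf : MapsTo f (Icc 0 1) (Icc 0 1))
    (hg : MapsTo g (Icc 0 1) (Icc 0 1)) {d : ℝ}
    (hd : ∀ y ∈ Icc (0:ℝ) 1, |f y - g y| ≤ d) :
    ∀ x ∈ Icc (0:ℝ) 1, |T F G f x - T F G g x| ≤ d / G.γ := by
  intro x hx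
  have hd0 : 0 ≤ d := le_trans (abs_nonneg _) (hd 0 ⟨le_rfl, one_pos.le⟩)
  by_cases h1 : x ≤ F.a
  · rw [T_eq₁ F G f h1, T_eq₁ F G g h1]
    have hk : F.k x ∈ Icc (0:ℝ) 1 := F.maps_left ⟨hx.1, h1⟩
    calc |G.Kp (f (F.k x)) - G.Kp (g (F.k x))| ≤ |f (F.k x) - g (F.k x)| / G.γ :=
        G.Kp_lip _ (hf hk) _ (hg hk)
      _ ≤ d / G.γ := (div_le_div_iff_of_pos_right G.hγ0).mpr (hd _ hk)
  · by_cases h2 : x < F.b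
    · have : T F G f x = T F G g x := by simp [T, h1, h2]
      rw [this, sub_self, abs_zero]
      exact div_nonneg hd0 G.hγ0.le
    · rw [T_eq₃ F G f (not_lt.1 h2), T_eq₃ F G g (not_lt.1 h2)]
      have hk : F.k x ∈ Icc (0:ℝ) 1 := F.maps_right ⟨not_lt.1 h2, hx.2⟩
      calc |G.Km (f (F.k x)) - G.Km (g (F.k x))| ≤ |f (F.k x) - g (F.k x)| / G.γ :=
        G.Km_lip _ (hf hk) _ (hg hk)
      _ ≤ d / G.γ := (div_le_div_iff_of_pos_right G.hγ0).mpr (hd _ hk)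

noncomputable def seq (F G : CantorMap) : ℕ → ℝ → ℝ := fun n => (T F G)^[n] id

lemma seq_succ (n : ℕ) : seq F G (n + 1) = T F G (seq F G n) := by
  simp only [seq, Function.iterate_succ_apply']

lemma good_id : Good (id : ℝ → ℝ) :=
  ⟨continuousOn_id, fun x _ y _ h => h, fun x hx => hx, rfl, rfl⟩

lemma good_seq (n : ℕ) : Good (seq F G n) := by
  induction n with
  | zero => exact good_id
  | succ n ih => rw [seq_succ]; exact good_T F G ih

lemma seq_step : ∀ n : ℕ, ∀ x ∈ Icc (0:ℝ) 1,
    |seq F G (n + 1) x - seq F G n x| ≤ (1 / G.γ) ^ n := by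
  intro n
  induction n with
  | zero =>
    intro x hx
    have h1 := (good_seq F G 1).2.2.1 hx
    have h0 := (good_seq F G 0).2.2.1 hx
    rw [pow_zero]
    exact abs_le.2 ⟨by linarith [h1.1, h0.2], by linarith [h1.2, h0.1]⟩
  | succ n ih =>
    intro x hx
    have hcon := T_contract F G (good_seq F G (n+1)).2.2.1 (good_seq F G n).2.2.1 ih x hx
    rw [← seq_succ F G (n+1), ← seq_succ F G n] at hcon
    refine le_trans hcon (le_of_eq ?_)
    rw [pow_succ, div_eq_mul_inv, one_div]

lemma conj_exists : ∃ ψ : ℝ → ℝ, Conjugating F G ψ := by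
  classical
  set q : ℝ := 1 / G.γ with hqdef
  have hq0 : 0 ≤ q := le_of_lt (div_pos one_pos G.hγ0)
  have hq1 : q < 1 := (div_lt_one G.hγ0).2 G.hγ
  have hstep : ∀ x ∈ Icc (0:ℝ) 1, ∀ n : ℕ,
      dist (seq F G n x) (seq F G (n+1) x) ≤ 1 * q ^ n := by
    intro x hx n
    rw [Real.dist_eq, abs_sub_comm, one_mul]
    exact seq_step F G n x hx
  have hcauchy : ∀ x ∈ Icc (0:ℝ) 1, CauchySeq (fun n => seq F G n x) := by
    intro x hx
    exact cauchySeq_of_le_geometric q 1 hq1 (hstep x hx)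
  set ψ : ℝ → ℝ := fun x => Filter.limUnder Filter.atTop (fun n => seq F G n x) with hψdef
  have htend : ∀ x ∈ Icc (0:ℝ) 1,
      Filter.Tendsto (fun n => seq F G n x) Filter.atTop (nhds (ψ x)) :=
    fun x hx => (hcauchy x hx).tendsto_limUnder
  have htail : ∀ n : ℕ, ∀ x ∈ Icc (0:ℝ) 1,
      |seq F G n x - ψ x| ≤ 1 * q ^ n / (1 - q) := by
    intro n x hx
    rw [← Real.dist_eq]
    exact dist_le_of_le_geometric_of_tendsto q 1 hq1 (hstep x hx) (htend x hx) n
  have heps : Filter.Tendsto (fun n : ℕ => 1 * q ^ n / (1 - q)) Filter.atTop (nhds 0) := by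
    have := (tendsto_pow_atTop_nhds_zero_of_lt_one hq0 hq1).div_const (1 - q)
    simpa using this
  have h0I : (0:ℝ) ∈ Icc (0:ℝ) 1 := ⟨le_rfl, one_pos.le⟩
  have h1I : (1:ℝ) ∈ Icc (0:ℝ) 1 := ⟨one_pos.le, le_rfl⟩
  have hψ0 : ψ 0 = 0 :=
    tendsto_nhds_unique ((htend 0 h0I).congr' (Filter.Eventually.of_forall
      (fun n => (good_seq F G n).2.2.2.1))) tendsto_const_nhds
  have hψ1 : ψ 1 = 1 :=
    tendsto_nhds_unique ((htend 1 h1I).congr' (Filter.Eventually.of_forall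
      (fun n => (good_seq F G n).2.2.2.2))) tendsto_const_nhds
  have hψmap : MapsTo ψ (Icc 0 1) (Icc 0 1) := by
    intro x hx
    exact isClosed_Icc.mem_of_tendsto (htend x hx)
      (Filter.Eventually.of_forall (fun n => (good_seq F G n).2.2.1 hx))
  have hψmono : MonotoneOn ψ (Icc 0 1) := by
    intro x hx y hy hxy
    exact le_of_tendsto_of_tendsto' (htend x hx) (htend y hy)
      (fun n => (good_seq F G n).2.1 hx hy hxy)
  have huc : TendstoUniformlyOn (seq F G) ψ Filter.atTop (Icc 0 1) := by
    rw [Metric.tendstoUniformlyOn_iff]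
    intro ε hε
    filter_upwards [heps.eventually (gt_mem_nhds hε)] with n hn x hx
    rw [dist_comm, Real.dist_eq]
    exact lt_of_le_of_lt (htail n x hx) hn
  have hcont : ContinuousOn ψ (Icc 0 1) :=
    huc.continuousOn (Filter.Eventually.of_forall (fun n => (good_seq F G n).1)).frequently
  have hfix : ∀ x ∈ Icc (0:ℝ) 1, ψ x = T F G ψ x := by
    intro x hx
    have h1 : ∀ n : ℕ, dist (seq F G (n+1) x) (T F G ψ x) ≤ (1 * q ^ n / (1 - q)) / G.γ := by
      intro n
      rw [Real.dist_eq, seq_succ]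
      exact T_contract F G (good_seq F G n).2.2.1 hψmap
        (fun y hy => htail n y hy) x hx
    have h2 : Filter.Tendsto (fun n => seq F G (n+1) x) Filter.atTop (nhds (T F G ψ x)) := by
      rw [tendsto_iff_dist_tendsto_zero]
      exact squeeze_zero (fun n => dist_nonneg) h1 (by simpa using heps.div_const G.γ)
    have h3 : Filter.Tendsto (fun n => seq F G (n+1) x) Filter.atTop (nhds (ψ x)) :=
      (htend x hx).comp (Filter.tendsto_add_atTop_nat 1)
    exact tendsto_nhds_unique h3 h2
  have haI : F.a ∈ Icc (0:ℝ) 1 := ⟨F.ha.le, by linarith [F.hab, F.hb]⟩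
  have hbI : F.b ∈ Icc (0:ℝ) 1 := ⟨by linarith [F.ha, F.hab], F.hb.le⟩
  have hψa : ψ F.a = G.a := by
    rw [hfix F.a haI, T_eq₁ F G ψ le_rfl, F.ka, hψ1, G.Kp1]
  have hψb : ψ F.b = G.b := by
    rw [hfix F.b hbI, T_eq₃ F G ψ le_rfl, F.kb, hψ1, G.Km1]
  have hψgap : ∀ x ∈ Icc F.a F.b, ψ x = line F G x := by
    intro x hx
    rw [hfix x ⟨le_trans F.ha.le hx.1, le_trans hx.2 F.hb.le⟩, T_gap F G ψ hψ1 hx]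
  -- strict monotonicity
  have key : ∀ n : ℕ, ∀ x ∈ Icc (0:ℝ) 1, ∀ y ∈ Icc (0:ℝ) 1, x < y →
      1 ≤ F.γ ^ n * (y - x) → ψ x < ψ y := by
    intro n
    induction n with
    | zero =>
      intro x hx y hy hxy h
      rw [pow_zero, one_mul] at h
      have hx0 : x = 0 := le_antisymm (by linarith [hy.2]) hx.1
      have hy1 : y = 1 := le_antisymm hy.2 (by linarith [hx.1])
      rw [hx0, hy1, hψ0, hψ1]; exact one_pos
    | succ n ih =>
      intro x hx y hy hxy h
      have hγn : (0:ℝ) < F.γ ^ n := pow_pos F.hγ0 n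
      by_cases hya : y ≤ F.a
      · -- both in the left branch
        have hxa : x ∈ Icc 0 F.a := ⟨hx.1, by linarith⟩
        have hya' : y ∈ Icc 0 F.a := ⟨hy.1, hya⟩
        have hkk : F.k x < F.k y := F.strictMono_left hxa hya' hxy
        have hexp : F.γ * (y - x) ≤ F.k y - F.k x := by
          have := F.expand_left x hxa y hya' hxy
          rwa [abs_of_pos (by linarith)] at this
        have harg : 1 ≤ F.γ ^ n * (F.k y - F.k x) := by
          have : F.γ ^ (n + 1) * (y - x) = F.γ ^ n * (F.γ * (y - x)) := by ring
          nlinarith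
        have hψk := ih (F.k x) (F.maps_left hxa) (F.k y) (F.maps_left hya') hkk harg
        have e1 : ψ x = G.Kp (ψ (F.k x)) := by
          rw [hfix x hx, T_eq₁ F G ψ hxa.2]
        have e2 : ψ y = G.Kp (ψ (F.k y)) := by
          rw [hfix y hy, T_eq₁ F G ψ hya]
        rw [e1, e2]
        exact G.Kp_strictMono (hψmap (F.maps_left hxa)) (hψmap (F.maps_left hya')) hψk
      · by_cases hxb : F.b ≤ x
        · -- both in the right branch
          have hxb' : x ∈ Icc F.b 1 := ⟨hxb, hx.2⟩
          have hyb' : y ∈ Icc F.b 1 := ⟨by linarith, hy.2⟩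
          have hkk : F.k y < F.k x := F.strictAnti_right hxb' hyb' hxy
          have hexp : F.γ * (y - x) ≤ F.k x - F.k y := by
            have := F.expand_right x hxb' y hyb' hxy
            rwa [abs_of_neg (by linarith), neg_sub] at this
          have harg : 1 ≤ F.γ ^ n * (F.k x - F.k y) := by
            have h2 : F.γ ^ n * (F.γ * (y - x)) ≤ F.γ ^ n * (F.k x - F.k y) :=
              mul_le_mul_of_nonneg_left hexp hγn.le
            calc (1:ℝ) ≤ F.γ ^ (n+1) * (y - x) := h
              _ = F.γ ^ n * (F.γ * (y - x)) := by ring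
              _ ≤ _ := h2
          have hψk := ih (F.k y) (F.maps_right hyb') (F.k x) (F.maps_right hxb') hkk harg
          have e1 : ψ x = G.Km (ψ (F.k x)) := by
            rw [hfix x hx, T_eq₃ F G ψ hxb]
          have e2 : ψ y = G.Km (ψ (F.k y)) := by
            rw [hfix y hy, T_eq₃ F G ψ hyb'.1]
          rw [e1, e2]
          exact G.Km_strictAnti (hψmap (F.maps_right hyb')) (hψmap (F.maps_right hxb')) hψk
        · -- the interval [x, y] meets the gap
          push_neg at hya hxb
          by_cases hxa : x ≤ F.a
          · have hx' : ψ x ≤ G.a := by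
              rw [← hψa]; exact hψmono hx haI hxa
            by_cases hyb : F.b ≤ y
            · have hy' : G.b ≤ ψ y := by
                rw [← hψb]; exact hψmono hbI hy hyb
              have : G.a < G.b := G.hab
              linarith
            · push_neg at hyb
              have hy' : ψ y = line F G y := hψgap y ⟨hya.le, hyb.le⟩
              have : line F G F.a < line F G y := line_strictMono F G hya
              rw [line_a] at this
              linarith [hy'.ge, hy'.le, this]
          · push_neg at hxa
            have hx' : ψ x = line F G x := hψgap x ⟨hxa.le, hxb.le⟩
            by_cases hyb : F.b ≤ y
            · have hy' : G.b ≤ ψ y := by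
                rw [← hψb]; exact hψmono hbI hy hyb
              have : line F G x < line F G F.b := line_strictMono F G hxb
              rw [line_b] at this
              linarith
            · push_neg at hyb
              have hy' : ψ y = line F G y := hψgap y ⟨(hxa.trans hxy).le, hyb.le⟩
              rw [hx', hy']
              exact line_strictMono F G hxy
  have hψsm : StrictMonoOn ψ (Icc 0 1) := by
    intro x hx y hy hxy
    have hpos : 0 < y - x := by linarith
    obtain ⟨n, hn⟩ := Filter.Eventually.exists
      ((Filter.tendsto_atTop.1 (tendsto_pow_atTop_atTop_of_one_lt F.hγ)) (1 / (y - x)))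
    refine key n x hx y hy hxy ?_
    rw [div_le_iff₀ hpos] at hn
    linarith
  refine ⟨ψ, hcont, hψsm, hψmap, ?_, ?_⟩
  · intro y hy
    have hKp : F.Kp y ∈ Icc 0 F.a := F.Kp_mem y hy
    have : ψ (F.Kp y) = T F G ψ (F.Kp y) :=
      hfix _ ⟨hKp.1, le_trans hKp.2 (by linarith [F.hab, F.hb])⟩
    rw [this, T_eq₁ F G ψ hKp.2, F.Kp_right_inv y hy]
  · intro y hy
    have hKm : F.Km y ∈ Icc F.b 1 := F.Km_mem y hy
    have : ψ (F.Km y) = T F G ψ (F.Km y) :=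
      hfix _ ⟨le_trans (by linarith [F.ha, F.hab]) hKm.1, hKm.2⟩
    rw [this, T_eq₃ F G ψ hKm.1, F.Km_right_inv y hy]

lemma conj_unique {ψ₁ ψ₂ : ℝ → ℝ} (h₁ : Conjugating F G ψ₁) (h₂ : Conjugating F G ψ₂) :
    EqOn ψ₁ ψ₂ F.cantorSet := by
  obtain ⟨_, _, hmap₁, hKp₁, hKm₁⟩ := h₁
  obtain ⟨_, _, hmap₂, hKp₂, hKm₂⟩ := h₂
  set D := Icc (0:ℝ) F.a ∪ Icc F.b 1 with hD
  have hDI : D ⊆ Icc (0:ℝ) 1 := by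
    intro z hz
    rcases hz with hz | hz
    · exact ⟨hz.1, hz.2.trans (by linarith [F.hab, F.hb])⟩
    · exact ⟨le_trans (by linarith [F.ha, F.hab]) hz.1, hz.2⟩
  have Q : ∀ n : ℕ, ∀ z ∈ Icc (0:ℝ) 1, (∀ m, m < n → F.k^[m] z ∈ D) →
      |ψ₁ z - ψ₂ z| ≤ (1 / G.γ) ^ n := by
    intro n
    induction n with
    | zero =>
      intro z hz _
      have a1 := hmap₁ hz
      have a2 := hmap₂ hz
      rw [pow_zero]
      exact abs_le.2 ⟨by linarith [a1.1, a2.2], by linarith [a1.2, a2.1]⟩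
    | succ n ih =>
      intro z hz hmem
      have hz0 : z ∈ D := by simpa using hmem 0 (Nat.succ_pos n)
      have hknext : ∀ m, m < n → F.k^[m] (F.k z) ∈ D := by
        intro m hm
        have := hmem (m+1) (Nat.succ_lt_succ hm)
        rwa [Function.iterate_succ_apply] at this
      rcases hz0 with hzl | hzr
      · have hkz : F.k z ∈ Icc (0:ℝ) 1 := F.maps_left hzl
        have e : z = F.Kp (F.k z) := (F.Kp_left_inv z hzl).symm
        have e₁ : ψ₁ z = G.Kp (ψ₁ (F.k z)) := by
          calc ψ₁ z = ψ₁ (F.Kp (F.k z)) := by rw [← e]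
            _ = G.Kp (ψ₁ (F.k z)) := hKp₁ _ hkz
        have e₂ : ψ₂ z = G.Kp (ψ₂ (F.k z)) := by
          calc ψ₂ z = ψ₂ (F.Kp (F.k z)) := by rw [← e]
            _ = G.Kp (ψ₂ (F.k z)) := hKp₂ _ hkz
        rw [e₁, e₂]
        calc |G.Kp (ψ₁ (F.k z)) - G.Kp (ψ₂ (F.k z))| ≤ |ψ₁ (F.k z) - ψ₂ (F.k z)| / G.γ :=
            G.Kp_lip _ (hmap₁ hkz) _ (hmap₂ hkz)
          _ ≤ (1 / G.γ) ^ n / G.γ :=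
            (div_le_div_iff_of_pos_right G.hγ0).mpr (ih (F.k z) hkz hknext)
          _ = (1 / G.γ) ^ (n + 1) := by rw [pow_succ, div_eq_mul_inv, one_div]
      · have hkz : F.k z ∈ Icc (0:ℝ) 1 := F.maps_right hzr
        have e : z = F.Km (F.k z) := (F.Km_left_inv z hzr).symm
        have e₁ : ψ₁ z = G.Km (ψ₁ (F.k z)) := by
          calc ψ₁ z = ψ₁ (F.Km (F.k z)) := by rw [← e]
            _ = G.Km (ψ₁ (F.k z)) := hKm₁ _ hkz
        have e₂ : ψ₂ z = G.Km (ψ₂ (F.k z)) := by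
          calc ψ₂ z = ψ₂ (F.Km (F.k z)) := by rw [← e]
            _ = G.Km (ψ₂ (F.k z)) := hKm₂ _ hkz
        rw [e₁, e₂]
        calc |G.Km (ψ₁ (F.k z)) - G.Km (ψ₂ (F.k z))| ≤ |ψ₁ (F.k z) - ψ₂ (F.k z)| / G.γ :=
            G.Km_lip _ (hmap₁ hkz) _ (hmap₂ hkz)
          _ ≤ (1 / G.γ) ^ n / G.γ :=
            (div_le_div_iff_of_pos_right G.hγ0).mpr (ih (F.k z) hkz hknext)
          _ = (1 / G.γ) ^ (n + 1) := by rw [pow_succ, div_eq_mul_inv, one_div]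
  intro z hz
  have hzD : ∀ n : ℕ, F.k^[n] z ∈ D := by
    intro n
    exact mem_iInter.1 hz n
  have hzI : z ∈ Icc (0:ℝ) 1 := hDI (by simpa using hzD 0)
  have hb : ∀ n : ℕ, |ψ₁ z - ψ₂ z| ≤ (1 / G.γ) ^ n :=
    fun n => Q n z hzI (fun m _ => hzD m)
  have hq1 : (1:ℝ) / G.γ < 1 := (div_lt_one G.hγ0).2 G.hγ
  have hq0 : (0:ℝ) ≤ 1 / G.γ := (div_pos one_pos G.hγ0).le
  have h0 : |ψ₁ z - ψ₂ z| ≤ 0 :=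
    ge_of_tendsto (tendsto_pow_atTop_nhds_zero_of_lt_one hq0 hq1)
      (Filter.Eventually.of_forall hb)
  have : |ψ₁ z - ψ₂ z| = 0 := le_antisymm h0 (abs_nonneg _)
  exact sub_eq_zero.1 (abs_eq_zero.1 this)

end CantorConj

/-- There exists a strictly increasing continuous map `ψ : [0,1] → [0,1]` with
`ψ ∘ K^F_± = K^G_± ∘ ψ`; moreover the restriction of such a map to the Cantor set
of `k_F` is uniquely determined. -/
theorem cantor_conjugacy (F G : CantorMap) :
    (∃ ψ : ℝ → ℝ, Conjugating F G ψ) ∧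
    ∀ ψ₁ ψ₂ : ℝ → ℝ, Conjugating F G ψ₁ → Conjugating F G ψ₂ →
      EqOn ψ₁ ψ₂ F.cantorSet :=
  ⟨CantorConj.conj_exists F G, fun _ _ h₁ h₂ => CantorConj.conj_unique F G h₁ h₂⟩
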